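/- Let n ≥ 1, h > 0, M ≥ 0, b > 0 and θ ∈ ℝ. Suppose φ : ℝ → ℝ is (n−1)-times continuously differentiable on [θ, θ + n·h] with its (n−1)-st derivative differentiable on (θ, θ + n·h), and |φ^{(n)}(ξ)| ≤ M · b^n for all ξ ∈ (θ, θ + n·h). Then |∑_{k=0}^{n} (−1)^k · C(n,k) · φ(θ + k·h)| ≤ (M / √(2πn)) · (2·h·b·e)^n. -/

import Mathlib

open Set Real in
theorem my_iteratedDerivWithin_congr_set {f : ℝ → ℝ} {s t : Set ℝ} {x : ℝ}
    (h : s =ᶠ[nhds x] t) (n : ℕ) :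
    iteratedDerivWithin n f s x = iteratedDerivWithin n f t x := by
  simp only [iteratedDerivWithin_eq_iteratedFDerivWithin,
    iteratedFDerivWithin_congr_set h]

open Set in
theorem blend_set_eeq {θ c1 c2 x : ℝ} (hx : x < c1) (h12 : c1 ≤ c2) :
    (Set.Icc θ c1 : Set ℝ) =ᶠ[nhds x] Set.Icc θ c2 := by
  refine Filter.eventuallyEq_set.2 ?_
  filter_upwards [Iio_mem_nhds hx] with y hy
  simp only [Set.mem_Icc, Set.mem_Iio] at *
  constructor
  · rintro ⟨a, bb⟩; exact ⟨a, le_trans bb h12⟩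
  · rintro ⟨a, _⟩; exact ⟨a, le_of_lt hy⟩

theorem blend_altsum : ∀ (j n : ℕ), j < n →
    ∑ k ∈ Finset.range (n+1), (-1:ℝ)^k * (n.choose k : ℝ) * (k:ℝ)^j = 0 := by
  intro j
  induction j using Nat.strong_induction_on with
  | _ j ih =>
    intro n hjn
    match j with
    | 0 =>
      have h := Int.alternating_sum_range_choose_of_ne (n := n) (by omega)
      have : ((∑ i ∈ Finset.range (n + 1), (-1 : ℤ) ^ i * ↑(n.choose i) : ℤ) : ℝ) = 0 := by
        rw [h]; norm_num
      push_cast at this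
      simpa using this
    | j + 1 =>
      obtain ⟨m, rfl⟩ : ∃ m, n = m + 1 := ⟨n - 1, by omega⟩
      rw [Finset.sum_range_succ']
      simp only [Nat.cast_zero, ne_eq]
      have h0 : (-1:ℝ)^0 * ((m+1).choose 0 : ℝ) * (0:ℝ)^(j+1) = 0 := by simp
      rw [h0, add_zero]
      have key : ∀ k, (-1:ℝ)^(k+1) * ((m+1).choose (k+1) : ℝ) * ((k:ℝ)+1)^(j+1)
          = -((m:ℝ)+1) * ((-1:ℝ)^k * ((m).choose k : ℝ) * ((k:ℝ)+1)^j) := by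
        intro k
        have hc : ((m+1).choose (k+1) : ℝ) * ((k:ℝ)+1) = ((m:ℝ)+1) * (m.choose k : ℝ) := by
          have h2 : ((m+1) * m.choose k : ℕ) = ((m+1).choose (k+1) * (k+1) : ℕ) :=
            Nat.add_one_mul_choose_eq m k
          have h3 := congrArg (fun z : ℕ => (z : ℝ)) h2
          push_cast at h3
          linarith
        have : (-1:ℝ)^(k+1) = -(-1:ℝ)^k := by ring
        rw [this]
        calc -(-1:ℝ)^k * ((m+1).choose (k+1) : ℝ) * ((k:ℝ)+1)^(j+1)
            = -(-1:ℝ)^k * (((m+1).choose (k+1) : ℝ) * ((k:ℝ)+1)) * ((k:ℝ)+1)^j := by ring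
          _ = -(-1:ℝ)^k * (((m:ℝ)+1) * (m.choose k : ℝ)) * ((k:ℝ)+1)^j := by rw [hc]
          _ = -((m:ℝ)+1) * ((-1:ℝ)^k * ((m).choose k : ℝ) * ((k:ℝ)+1)^j) := by ring
      have : ∑ k ∈ Finset.range (m+1), (-1:ℝ)^(k+1) * ((m+1).choose (k+1) : ℝ) * ((k:ℝ)+1)^(j+1)
          = -((m:ℝ)+1) * ∑ k ∈ Finset.range (m+1), ((-1:ℝ)^k * ((m).choose k : ℝ) * ((k:ℝ)+1)^j) := by
        rw [Finset.mul_sum]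
        exact Finset.sum_congr rfl fun k _ => key k
      push_cast
      rw [this]
      have expand : ∀ k : ℕ, ((k:ℝ)+1)^j = ∑ i ∈ Finset.range (j+1), (k:ℝ)^i * (j.choose i : ℝ) := by
        intro k
        rw [add_pow]
        exact Finset.sum_congr rfl fun i _ => by ring
      have inner : ∑ k ∈ Finset.range (m+1), ((-1:ℝ)^k * ((m).choose k : ℝ) * ((k:ℝ)+1)^j) = 0 := by
        calc ∑ k ∈ Finset.range (m+1), ((-1:ℝ)^k * ((m).choose k : ℝ) * ((k:ℝ)+1)^j)
            = ∑ k ∈ Finset.range (m+1), ∑ i ∈ Finset.range (j+1),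
                (j.choose i : ℝ) * ((-1:ℝ)^k * ((m).choose k : ℝ) * (k:ℝ)^i) := by
              refine Finset.sum_congr rfl fun k _ => ?_
              rw [expand, Finset.mul_sum]
              exact Finset.sum_congr rfl fun i _ => by ring
          _ = ∑ i ∈ Finset.range (j+1), (j.choose i : ℝ) *
                ∑ k ∈ Finset.range (m+1), ((-1:ℝ)^k * ((m).choose k : ℝ) * (k:ℝ)^i) := by
              rw [Finset.sum_comm]
              exact Finset.sum_congr rfl fun i _ => by rw [Finset.mul_sum]
          _ = 0 := by
              refine Finset.sum_eq_zero fun i hi => ?_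
              rw [Finset.mem_range] at hi
              rw [ih i (by omega) m (by omega)]
              ring
      rw [inner]; ring

open Real in
theorem blend_stirling_lower (n : ℕ) (hn : 1 ≤ n) :
    Real.sqrt (2 * π * n) * (n / Real.exp 1) ^ n ≤ (n.factorial : ℝ) := by
  obtain ⟨m, rfl⟩ : ∃ m, n = m + 1 := ⟨n - 1, by omega⟩
  have hlim := Stirling.tendsto_stirlingSeq_sqrt_pi
  have hanti := Stirling.stirlingSeq'_antitone
  have h1 : Real.sqrt π ≤ Stirling.stirlingSeq (m + 1) := by
    have : Filter.Tendsto (Stirling.stirlingSeq ∘ Nat.succ) Filter.atTop (nhds (Real.sqrt π)) :=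
      hlim.comp (Filter.tendsto_add_atTop_nat 1)
    exact hanti.le_of_tendsto this m
  rw [Stirling.stirlingSeq] at h1
  have hpos : 0 < Real.sqrt (2 * ((m:ℝ)+1)) * (((m:ℝ)+1) / Real.exp 1) ^ (m+1) := by
    positivity
  push_cast at h1
  have h2 := (le_div_iff₀ hpos).mp h1
  have h3 : Real.sqrt (2 * π * ((m:ℝ)+1)) = Real.sqrt π * Real.sqrt (2 * ((m:ℝ)+1)) := by
    rw [← Real.sqrt_mul (by positivity)]
    ring_nf
  push_cast
  rw [h3, mul_assoc]
  exact h2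

open Set Real in
/-- Lemma 1 of the paper:
`|(𝒥 - 𝒯_h)^n φ(θ)| ≤ (M / √(2πn)) (2 h b e)^n`. -/
theorem blend_lemma_one
    (n : ℕ) (hn : 1 ≤ n) (h : ℝ) (hh : 0 < h) (M b : ℝ) (hM : 0 ≤ M) (hb : 0 < b)
    (θ : ℝ) (φ : ℝ → ℝ)
    (hC : ContDiffOn ℝ (n - 1 : ℕ) φ (Icc θ (θ + n * h)))
    (hD : DifferentiableOn ℝ
      (iteratedDerivWithin (n - 1) φ (Icc θ (θ + n * h))) (Ioo θ (θ + n * h)))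
    (hbound : ∀ ξ ∈ Ioo θ (θ + n * h),
      |iteratedDerivWithin n φ (Icc θ (θ + n * h)) ξ| ≤ M * b ^ n) :
    |∑ k ∈ Finset.range (n + 1),
        (-1 : ℝ) ^ k * (n.choose k : ℝ) * φ (θ + k * h)| ≤
      M / Real.sqrt (2 * π * n) * (2 * h * b * exp 1) ^ n := by
  have hn1 : n - 1 + 1 = n := Nat.succ_pred_eq_of_pos hn
  set S : Set ℝ := Icc θ (θ + n * h) with hS
  set d : ℕ → ℝ := fun i => iteratedDerivWithin i φ S θ with hd
  set R : ℕ → ℝ := fun k =>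
    φ (θ + k * h) - ∑ i ∈ Finset.range n, (((k : ℝ) * h) ^ i / i.factorial) * d i with hR
  set B : ℝ := M * b ^ n * ((n : ℝ) * h) ^ n / n.factorial with hB
  -- remainder bound
  have hRbound : ∀ k ∈ Finset.range (n + 1), |R k| ≤ B := by
    intro k hk
    rw [Finset.mem_range] at hk
    rcases Nat.eq_zero_or_pos k with rfl | hk1
    · have hz : R 0 = 0 := by
        have hd0 : d 0 = φ θ := by simp [hd, iteratedDerivWithin_zero]
        have hs0 : ∑ i ∈ Finset.range n, (((0 : ℕ) : ℝ) * h) ^ i / (i.factorial : ℝ) * d i = φ θ := by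
          obtain ⟨m, rfl⟩ : ∃ m, n = m + 1 := ⟨n - 1, by omega⟩
          rw [Finset.sum_range_succ']
          simp [hd0]
        simp only [hR, Nat.cast_zero, zero_mul, add_zero]
        rw [sub_eq_zero]
        exact (by simpa using hs0.symm)
      rw [hz, abs_zero, hB]
      positivity
    · have hkn : k ≤ n := by omega
      have hkh : (0:ℝ) < (k:ℝ) * h := by positivity
      have hxk : θ < θ + k * h := by linarith
      have hkle : θ + (k:ℝ) * h ≤ θ + n * h := by
        have : (k:ℝ) ≤ n := by exact_mod_cast hkn
        nlinarith
      have hagree : ∀ (i : ℕ) (x : ℝ), x < θ + (k:ℝ) * h →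
          iteratedDerivWithin i φ (Icc θ (θ + (k:ℝ) * h)) x = iteratedDerivWithin i φ S x := by
        intro i x hx
        exact my_iteratedDerivWithin_congr_set (blend_set_eeq hx hkle) i
      have hCk : ContDiffOn ℝ (n - 1 : ℕ) φ (Icc θ (θ + (k:ℝ) * h)) :=
        hC.mono (Icc_subset_Icc_right hkle)
      have hDk : DifferentiableOn ℝ
          (iteratedDerivWithin (n - 1) φ (Icc θ (θ + (k:ℝ) * h))) (Ioo θ (θ + (k:ℝ) * h)) := by
        have hsub : Ioo θ (θ + (k:ℝ) * h) ⊆ Ioo θ (θ + (n:ℝ) * h) :=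
          Ioo_subset_Ioo le_rfl hkle
        refine (hD.mono hsub).congr ?_
        intro x hx
        exact hagree _ x hx.2
      have hlag := taylor_mean_remainder_lagrange (f := φ) (n := n - 1) hxk.ne
        (by rwa [uIcc_of_le hxk.le]) (by rwa [uIcc_of_le hxk.le, uIoo_of_le hxk.le])
      rw [uIcc_of_le hxk.le, uIoo_of_le hxk.le] at hlag
      obtain ⟨x', hx', heq⟩ := hlag
      have hx'S : x' ∈ Ioo θ (θ + (n:ℝ) * h) := Ioo_subset_Ioo le_rfl hkle hx'
      have htp : taylorWithinEval φ (n - 1) (Icc θ (θ + (k:ℝ) * h)) θ (θ + (k:ℝ) * h)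
          = ∑ i ∈ Finset.range n, (((k : ℝ) * h) ^ i / i.factorial) * d i := by
        rw [taylor_within_apply]
        rw [hn1]
        refine Finset.sum_congr rfl fun i _ => ?_
        rw [smul_eq_mul, hagree i θ hxk]
        have h2 : θ + (k:ℝ) * h - θ = (k:ℝ) * h := by ring
        rw [h2]
        simp only [hd]
        ring
      have hRk : R k = iteratedDerivWithin n φ S x' * ((k:ℝ) * h) ^ n / n.factorial := by
        have h1 : iteratedDerivWithin (n - 1 + 1) φ (Icc θ (θ + (k:ℝ) * h)) x'
            = iteratedDerivWithin n φ S x' := by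
          rw [hn1]; exact hagree n x' hx'.2
        rw [hR]
        simp only
        rw [← htp]
        have h2 : θ + (k:ℝ) * h - θ = (k:ℝ) * h := by ring
        rw [heq, h1, hn1, h2]
      rw [hRk]
      have hb1 := hbound x' hx'S
      have hkn' : ((k:ℝ) * h) ^ n ≤ ((n:ℝ) * h) ^ n := by
        apply pow_le_pow_left₀ (by positivity)
        have : (k:ℝ) ≤ n := by exact_mod_cast hkn
        nlinarith
      rw [abs_div, abs_mul]
      rw [abs_of_nonneg (by positivity : (0:ℝ) ≤ ((k:ℝ) * h) ^ n),
        abs_of_nonneg (by positivity : (0:ℝ) ≤ (n.factorial : ℝ))]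
      rw [hB]
      apply div_le_div_of_nonneg_right ?_ (by positivity) |>.trans_eq rfl
      calc |iteratedDerivWithin n φ S x'| * ((k:ℝ) * h) ^ n
          ≤ (M * b ^ n) * ((n:ℝ) * h) ^ n := by
            apply mul_le_mul hb1 hkn' (by positivity)
            positivity
        _ = M * b ^ n * ((n:ℝ) * h) ^ n := by ring
  -- polynomial part vanishes
  have hpoly : ∑ k ∈ Finset.range (n + 1), (-1 : ℝ) ^ k * (n.choose k : ℝ) *
      (∑ i ∈ Finset.range n, (((k : ℝ) * h) ^ i / i.factorial) * d i) = 0 := by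
    calc ∑ k ∈ Finset.range (n + 1), (-1 : ℝ) ^ k * (n.choose k : ℝ) *
          (∑ i ∈ Finset.range n, (((k : ℝ) * h) ^ i / i.factorial) * d i)
        = ∑ k ∈ Finset.range (n+1), ∑ i ∈ Finset.range n,
            (d i * h^i / i.factorial) * ((-1:ℝ)^k * (n.choose k : ℝ) * (k:ℝ)^i) := by
          refine Finset.sum_congr rfl fun k _ => ?_
          rw [Finset.mul_sum]
          refine Finset.sum_congr rfl fun i _ => ?_
          rw [mul_pow]
          ring
      _ = ∑ i ∈ Finset.range n, ∑ k ∈ Finset.range (n+1),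
            (d i * h^i / i.factorial) * ((-1:ℝ)^k * (n.choose k : ℝ) * (k:ℝ)^i) :=
          Finset.sum_comm
      _ = 0 := by
          refine Finset.sum_eq_zero fun i hi => ?_
          rw [← Finset.mul_sum, blend_altsum i n (Finset.mem_range.mp hi), mul_zero]
  -- split the total sum
  have htotal : ∑ k ∈ Finset.range (n + 1), (-1 : ℝ) ^ k * (n.choose k : ℝ) * φ (θ + k * h)
      = ∑ k ∈ Finset.range (n + 1), (-1 : ℝ) ^ k * (n.choose k : ℝ) * R k := by
    have hφ : ∀ k : ℕ, φ (θ + k * h)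
        = (∑ i ∈ Finset.range n, (((k : ℝ) * h) ^ i / i.factorial) * d i) + R k := by
      intro k
      rw [hR]
      ring
    calc ∑ k ∈ Finset.range (n + 1), (-1 : ℝ) ^ k * (n.choose k : ℝ) * φ (θ + k * h)
        = ∑ k ∈ Finset.range (n + 1), ((-1 : ℝ) ^ k * (n.choose k : ℝ) *
            (∑ i ∈ Finset.range n, (((k : ℝ) * h) ^ i / i.factorial) * d i)
            + (-1 : ℝ) ^ k * (n.choose k : ℝ) * R k) := by
          refine Finset.sum_congr rfl fun k _ => ?_
          rw [hφ k]
          ring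
      _ = ∑ k ∈ Finset.range (n + 1), (-1 : ℝ) ^ k * (n.choose k : ℝ) *
            (∑ i ∈ Finset.range n, (((k : ℝ) * h) ^ i / i.factorial) * d i)
          + ∑ k ∈ Finset.range (n + 1), (-1 : ℝ) ^ k * (n.choose k : ℝ) * R k :=
          Finset.sum_add_distrib
      _ = ∑ k ∈ Finset.range (n + 1), (-1 : ℝ) ^ k * (n.choose k : ℝ) * R k := by
          rw [hpoly, zero_add]
  rw [htotal]
  have hBnn : 0 ≤ B := by rw [hB]; positivity
  have habs : |∑ k ∈ Finset.range (n + 1), (-1 : ℝ) ^ k * (n.choose k : ℝ) * R k|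
      ≤ (2:ℝ)^n * B := by
    calc |∑ k ∈ Finset.range (n + 1), (-1 : ℝ) ^ k * (n.choose k : ℝ) * R k|
        ≤ ∑ k ∈ Finset.range (n + 1), |(-1 : ℝ) ^ k * (n.choose k : ℝ) * R k| :=
          Finset.abs_sum_le_sum_abs _ _
      _ ≤ ∑ k ∈ Finset.range (n + 1), (n.choose k : ℝ) * B := by
          refine Finset.sum_le_sum fun k hk => ?_
          rw [abs_mul, abs_mul, abs_pow, abs_neg, abs_one, one_pow, one_mul, Nat.abs_cast]
          exact mul_le_mul_of_nonneg_left (hRbound k hk) (Nat.cast_nonneg _)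
      _ = (2:ℝ)^n * B := by
          rw [← Finset.sum_mul, ← Nat.cast_sum, Nat.sum_range_choose]
          push_cast
          ring
  refine habs.trans ?_
  -- final Stirling comparison
  have hn' : (0:ℝ) < n := by exact_mod_cast hn
  have hA : 0 < Real.sqrt (2 * π * n) :=
    Real.sqrt_pos.mpr (by nlinarith [pi_pos])
  set A : ℝ := Real.sqrt (2 * π * n) with hAdef
  have hF : (0:ℝ) < (n.factorial : ℝ) := by exact_mod_cast n.factorial_pos
  have hE : (0:ℝ) < (Real.exp 1)^n := by positivity
  have hstir := blend_stirling_lower n hn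
  rw [div_pow] at hstir
  have key : A * (n:ℝ)^n ≤ (n.factorial : ℝ) * (Real.exp 1)^n := by
    rw [hAdef]
    rw [← mul_div_assoc] at hstir
    exact (div_le_iff₀ hE).mp hstir
  have hL : (2:ℝ)^n * B = (2:ℝ)^n * M * b^n * (n:ℝ)^n * h^n / (n.factorial : ℝ) := by
    rw [hB, mul_pow]
    ring
  have hRHS : M / A * (2 * h * b * Real.exp 1) ^ n
      = M * ((2:ℝ)^n * h^n * b^n * (Real.exp 1)^n) / A := by
    rw [mul_pow, mul_pow, mul_pow]
    ring
  rw [hL, hRHS, div_le_div_iff₀ hF hA]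
  have hC0 : (0:ℝ) ≤ (2:ℝ)^n * M * b^n * h^n := by positivity
  nlinarith [mul_le_mul_of_nonneg_left key hC0]
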